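/- arXiv:1701.07016 — 3 statements merged into one kernel-verified Lean document; each statement's English description precedes it below -/
import Mathlib

section
/- For every positive integer $n$, $\sum_{k=1}^{n} [2k]\, q^{n-k} \binom{2n}{n+k}_q = [n] \binom{2n}{n}_q$, where $[m] = 1+q+\cdots+q^{m-1}$ and $\binom{a}{b}_q$ denotes the Gaussian binomial coefficient, as an identity of polynomials in $q$. -/
open Polynomial Finset

/-- The `q`-integer `[n] = 1 + q + ⋯ + q^(n-1)` as a polynomial in `ℤ[q]`. -/
noncomputable def qint (n : ℕ) : Polynomial ℤ := ∑ i ∈ Finset.range n, Polynomial.X ^ i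

/-- The Gaussian binomial coefficient `[n choose k]_q` in `ℤ[q]`, via the `q`-Pascal rule. -/
noncomputable def qbinom : ℕ → ℕ → Polynomial ℤ
  | _, 0 => 1
  | 0, _ + 1 => 0
  | n + 1, k + 1 => qbinom n k + Polynomial.X ^ (k + 1) * qbinom n (k + 1)

lemma qbinom_zero_right (n : ℕ) : qbinom n 0 = 1 := by cases n <;> rfl

lemma qbinom_succ_succ (n k : ℕ) :
    qbinom (n + 1) (k + 1) = qbinom n k + Polynomial.X ^ (k + 1) * qbinom n (k + 1) := rfl

lemma qbinom_eq_zero (n : ℕ) : ∀ k, n < k → qbinom n k = 0 := by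
  induction n with
  | zero =>
    intro k hk
    match k, hk with
    | k + 1, _ => rfl
  | succ n ih =>
    intro k hk
    match k, hk with
    | k + 1, hk =>
      rw [qbinom_succ_succ, ih k (by omega), ih (k + 1) (by omega)]
      ring

lemma qint_zero : qint 0 = 0 := by simp [qint]

lemma qint_one : qint 1 = 1 := by simp [qint]

lemma qint_add (a b : ℕ) : qint (a + b) = qint a + Polynomial.X ^ a * qint b := by
  unfold qint
  rw [Finset.sum_range_add, Finset.mul_sum]
  congr 1
  refine Finset.sum_congr rfl (fun i _ => ?_)
  rw [← pow_add]

lemma qint_succ (a : ℕ) : qint (a + 1) = qint a + Polynomial.X ^ a := by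
  rw [qint_add, qint_one, mul_one]

/-- `[m+1-j] * C(m+1, j) = [m+1] * C(m, j)`. -/
lemma L2 (m : ℕ) : ∀ j, qint (m + 1 - j) * qbinom (m + 1) j = qint (m + 1) * qbinom m j := by
  induction m with
  | zero =>
    intro j
    match j with
    | 0 => simp [qbinom_zero_right]
    | j + 1 =>
      rw [qbinom_eq_zero 0 (j + 1) (by omega)]
      have h1 : 1 - (j + 1) = 0 := by omega
      rw [h1, qint_zero, zero_mul, mul_zero]
  | succ m ih =>
    intro j
    match j with
    | 0 => simp [qbinom_zero_right]
    | j + 1 =>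
      by_cases hj : j ≤ m
      · have h1 : m + 2 - (j + 1) = (m - j) + 1 := by omega
        have h2 : m + 1 - j = (m - j) + 1 := by omega
        have h3 : m + 1 - (j + 1) = m - j := by omega
        have ihj := ih j
        have ihj1 := ih (j + 1)
        rw [h2] at ihj
        rw [h3] at ihj1
        rw [h1, qbinom_succ_succ (m + 1) j]
        have e1 : (j + 1) + (m - j) = m + 1 := by omega
        have hp : (Polynomial.X : Polynomial ℤ) ^ (j + 1) * Polynomial.X ^ (m - j)
            = Polynomial.X ^ (m + 1) := by rw [← pow_add, e1]
        have hpas : qbinom m j + Polynomial.X ^ (j + 1) * qbinom m (j + 1)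
            = qbinom (m + 1) (j + 1) := (qbinom_succ_succ m j).symm
        calc qint (m - j + 1) * (qbinom (m + 1) j + Polynomial.X ^ (j + 1) * qbinom (m + 1) (j + 1))
            = qint (m - j + 1) * qbinom (m + 1) j
              + Polynomial.X ^ (j + 1) *
                ((qint (m - j) + Polynomial.X ^ (m - j)) * qbinom (m + 1) (j + 1)) := by
              rw [qint_succ]; ring
          _ = qint (m + 1) * qbinom m j
              + Polynomial.X ^ (j + 1) *
                (qint (m + 1) * qbinom m (j + 1)
                  + Polynomial.X ^ (m - j) * qbinom (m + 1) (j + 1)) := by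
              rw [ihj, add_mul, ihj1]
          _ = qint (m + 1) * qbinom (m + 1) (j + 1)
              + Polynomial.X ^ (m + 1) * qbinom (m + 1) (j + 1) := by
              rw [← hp, ← hpas]; ring
          _ = qint (m + 2) * qbinom (m + 1) (j + 1) := by
              rw [show m + 2 = (m + 1) + 1 from rfl, qint_succ (m + 1)]; ring
      · -- j > m, so qbinom (m+1) (j+1) = 0
        rw [qbinom_eq_zero (m + 1) (j + 1) (by omega), mul_zero]
        by_cases hj2 : j = m + 1
        · subst hj2
          rw [show m + 2 - (m + 1 + 1) = 0 from by omega, qint_zero, zero_mul]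
        · rw [qbinom_eq_zero (m + 2) (j + 1) (by omega), mul_zero]

/-- `[j+1] * C(m+1, j+1) = [m+1] * C(m, j)`. -/
lemma L1 (m : ℕ) : ∀ j, qint (j + 1) * qbinom (m + 1) (j + 1) = qint (m + 1) * qbinom m j := by
  induction m with
  | zero =>
    intro j
    match j with
    | 0 =>
      have : qbinom 1 1 = 1 := by rw [qbinom_succ_succ]; simp [qbinom_zero_right, qbinom_eq_zero 0 1 (by omega)]
      rw [this, qbinom_zero_right]
    | j + 1 =>
      rw [qbinom_eq_zero 1 (j + 2) (by omega), qbinom_eq_zero 0 (j + 1) (by omega),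
        mul_zero, mul_zero]
  | succ m ih =>
    intro j
    by_cases hj : j ≤ m + 1
    · rw [qbinom_succ_succ (m + 1) j]
      have key : qint (j + 1) * qbinom (m + 1) (j + 1) = qint (m + 1) * qbinom m j := ih j
      have l2 : qint (m + 1 - j) * qbinom (m + 1) j = qint (m + 1) * qbinom m j := L2 m j
      have split : qint (m + 2) = qint (j + 1) + Polynomial.X ^ (j + 1) * qint (m + 1 - j) := by
        rw [← qint_add, show j + 1 + (m + 1 - j) = m + 2 from by omega]
      calc qint (j + 1) * (qbinom (m + 1) j + Polynomial.X ^ (j + 1) * qbinom (m + 1) (j + 1))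
          = qint (j + 1) * qbinom (m + 1) j
            + Polynomial.X ^ (j + 1) * (qint (j + 1) * qbinom (m + 1) (j + 1)) := by ring
        _ = qint (j + 1) * qbinom (m + 1) j
            + Polynomial.X ^ (j + 1) * (qint (m + 1 - j) * qbinom (m + 1) j) := by
            rw [key, ← l2]
        _ = qint (m + 2) * qbinom (m + 1) j := by rw [split]; ring
    · rw [qbinom_eq_zero (m + 2) (j + 1) (by omega), qbinom_eq_zero (m + 1) j (by omega),
        mul_zero, mul_zero]

theorem stmt_0 (n : ℕ) (hn : 0 < n) :
    ∑ k ∈ Finset.Icc 1 n, qint (2 * k) * Polynomial.X ^ (n - k) * qbinom (2 * n) (n + k)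
      = qint n * qbinom (2 * n) n := by
  have h2n : 2 * n = (2 * n - 1) + 1 := by omega
  rw [show Finset.Icc 1 n = Finset.Ico 1 (n + 1) from by rw [Finset.Ico_add_one_right_eq_Icc],
    Finset.sum_Ico_eq_sum_range, show n + 1 - 1 = n from by omega]
  have hterm : ∀ i ∈ Finset.range n,
      qint (2 * (1 + i)) * Polynomial.X ^ (n - (1 + i)) * qbinom (2 * n) (n + (1 + i))
        = qint (2 * n) * (qbinom (2 * n - 1) (n + i) - qbinom (2 * n - 1) (n + (i + 1))) := by
    intro i hi
    have hi' : i < n := Finset.mem_range.mp hi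
    have hsplit : qint (n + (1 + i))
        = qint (n - (1 + i)) + Polynomial.X ^ (n - (1 + i)) * qint (2 * (1 + i)) := by
      rw [← qint_add, show n - (1 + i) + 2 * (1 + i) = n + (1 + i) from by omega]
    have l1 : qint (n + (1 + i)) * qbinom (2 * n) (n + (1 + i))
        = qint (2 * n) * qbinom (2 * n - 1) (n + i) := by
      have := L1 (2 * n - 1) (n + i)
      rw [show (2 * n - 1) + 1 = 2 * n from by omega,
        show n + i + 1 = n + (1 + i) from by omega] at this
      exact this
    have l2 : qint (n - (1 + i)) * qbinom (2 * n) (n + (1 + i))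
        = qint (2 * n) * qbinom (2 * n - 1) (n + (i + 1)) := by
      have := L2 (2 * n - 1) (n + (i + 1))
      rw [show (2 * n - 1) + 1 = 2 * n from by omega,
        show 2 * n - (n + (i + 1)) = n - (1 + i) from by omega,
        show n + (i + 1) = n + (1 + i) from by omega] at this
      rw [show n + (i + 1) = n + (1 + i) from by omega]
      exact this
    have expand : qint (2 * (1 + i)) * Polynomial.X ^ (n - (1 + i)) * qbinom (2 * n) (n + (1 + i))
        = qint (n + (1 + i)) * qbinom (2 * n) (n + (1 + i))
          - qint (n - (1 + i)) * qbinom (2 * n) (n + (1 + i)) := by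
      rw [hsplit]; ring
    rw [expand, l1, l2, mul_sub]
  rw [Finset.sum_congr rfl hterm, ← Finset.mul_sum, Finset.sum_range_sub' (fun i => qbinom (2 * n - 1) (n + i))]
  rw [add_zero, qbinom_eq_zero (2 * n - 1) (n + n) (by omega), sub_zero]
  have final := L2 (2 * n - 1) n
  rw [show (2 * n - 1) + 1 = 2 * n from by omega, show 2 * n - n = n from by omega] at final
  exact final.symm
end

section
/- For all positive integers $n$ and every non-negative integer $r$, the integer $\frac{2}{n^2}\binom{2n}{n}^{-1}\sum_{k=1}^{n} \binom{2n}{n-k} k^{2r+3}$ is an integer; that is, $n^2 \binom{2n}{n}$ divides $2\sum_{k=1}^{n} k^{2r+3}\binom{2n}{n-k}$. -/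
open Finset

lemma absorb (N m : ℕ) : (m+1) * (N+1).choose (m+1) = (N+1) * N.choose m := by
  have := Nat.add_one_mul_choose_eq N m
  rw [this]; ring

lemma compl_absorb (N m : ℕ) (h : m ≤ N) :
    (N + 1 - m) * (N+1).choose m = (N+1) * N.choose m := by
  have h1 : (N+1).choose m = (N+1).choose (N+1-m) := (Nat.choose_symm (by omega)).symm
  have h2 : N + 1 - m = (N - m) + 1 := by omega
  rw [h1, h2, absorb N (N-m), Nat.choose_symm h]

lemma tele_term (n k : ℕ) (hn : 0 < n) (h1 : 1 ≤ k) (hk : k ≤ n) :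
    (k:ℤ) * ((2*n).choose (n-k) : ℤ) =
      (n:ℤ) * ((if k ≤ n then ((2*n-1).choose (n-k) : ℤ) else 0)
        - (if k+1 ≤ n then ((2*n-1).choose (n-(k+1)) : ℤ) else 0)) := by
  rcases eq_or_lt_of_le hk with rfl | hlt
  · simp [Nat.sub_self]
  · have hi : n - k = (n - k - 1) + 1 := by omega
    set i := n - k - 1 with hidef
    have hik : n - (k+1) = i := by omega
    have h2n : 2*n = (2*n-1)+1 := by omega
    have pascal : (2*n).choose (i+1) = (2*n-1).choose i + (2*n-1).choose (i+1) := by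
      rw [h2n]; exact Nat.choose_succ_succ (2*n-1) i
    have habs : (i+1) * (2*n).choose (i+1) = (2*n) * (2*n-1).choose i := by
      have h := absorb (2*n-1) i
      rwa [show 2*n-1+1 = 2*n by omega] at h
    have hkn : (k:ℤ) = (n:ℤ) - (i+1) := by
      have : k + (i+1) = n := by omega
      push_cast [← this]; ring
    rw [if_pos hk, if_pos (show k+1 ≤ n by omega), hi, hik, hkn]
    have pc : ((2*n).choose (i+1) : ℤ) = ((2*n-1).choose i : ℤ) + ((2*n-1).choose (i+1) : ℤ) := by
      exact_mod_cast congrArg (Nat.cast : ℕ → ℤ) pascal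
    have hc : ((i:ℤ)+1) * ((2*n).choose (i+1) : ℤ) = (2*n) * ((2*n-1).choose i : ℤ) := by
      exact_mod_cast congrArg (Nat.cast : ℕ → ℤ) habs
    linear_combination (n:ℤ) * pc - hc

lemma rec_term (n k m : ℕ) (hn : 0 < n) (h1 : 1 ≤ k) (hk : k ≤ n) :
    (k:ℤ)^(m+2) * ((2*n).choose (n-k)) =
      (n:ℤ)^2 * ((k:ℤ)^m * ((2*n).choose (n-k)))
        - 2*n*(2*n-1) * ((k:ℤ)^m *
          (if k ≤ n-1 then ((2*(n-1)).choose (n-1-k) : ℤ) else 0)) := by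
  rcases eq_or_lt_of_le hk with rfl | hlt
  · rw [if_neg (by omega)]
    simp [Nat.sub_self]; ring
  · rw [if_pos (by omega)]
    have hi : n - k = (n - k - 1) + 1 := by omega
    set i := n - k - 1 with hidef
    have hik : n - 1 - k = i := by omega
    have habs : (i+1) * (2*n).choose (i+1) = (2*n) * (2*n-1).choose i := by
      have h := absorb (2*n-1) i
      rwa [show 2*n-1+1 = 2*n by omega] at h
    have hcomp : (2*n-1-i) * (2*n-1).choose i = (2*n-1) * (2*(n-1)).choose i := by
      have h := compl_absorb (2*(n-1)) i (by omega)
      rwa [show 2*(n-1)+1 = 2*n-1 by omega] at h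
    have hkn : (k:ℤ) = (n:ℤ) - (i+1) := by
      have : k + (i+1) = n := by omega
      push_cast [← this]; ring
    rw [hi, hik]
    have hc1 : ((i:ℤ)+1) * ((2*n).choose (i+1) : ℤ) = (2*n) * ((2*n-1).choose i : ℤ) := by
      exact_mod_cast congrArg (Nat.cast : ℕ → ℤ) habs
    have hc2 : ((2*n-1-i : ℕ):ℤ) * ((2*n-1).choose i : ℤ) = ((2*n-1 : ℕ):ℤ) * ((2*(n-1)).choose i : ℤ) := by
      exact_mod_cast congrArg (Nat.cast : ℕ → ℤ) hcomp
    have e1 : ((2*n-1-i : ℕ):ℤ) = 2*(n:ℤ)-1-i := by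
      have : i ≤ 2*n-1 := by omega
      push_cast [Nat.cast_sub this, Nat.cast_sub (by omega : 1 ≤ 2*n)]; ring
    have e2 : ((2*n-1 : ℕ):ℤ) = 2*(n:ℤ)-1 := by
      push_cast [Nat.cast_sub (by omega : 1 ≤ 2*n)]; ring
    rw [e1, e2] at hc2
    rw [hkn]
    have key : ((n:ℤ) - (i+1))^2 * ((2*n).choose (i+1) : ℤ)
        = (n:ℤ)^2 * ((2*n).choose (i+1) : ℤ) - 2*n*(2*n-1) * ((2*(n-1)).choose i : ℤ) := by
      linear_combination ((i:ℤ)+1-2*(n:ℤ)) * hc1 - 2*(n:ℤ) * hc2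
    calc ((n:ℤ) - (i+1))^(m+2) * ((2*n).choose (i+1) : ℤ)
        = ((n:ℤ) - (i+1))^m * (((n:ℤ) - (i+1))^2 * ((2*n).choose (i+1) : ℤ)) := by ring
      _ = _ := by rw [key]; ring

lemma half_id (n : ℕ) (hn : 0 < n) :
    (2*(n:ℤ)) * ((2*n-1).choose (n-1) : ℤ) = (n:ℤ) * ((2*n).choose n : ℤ) := by
  have h : n * (2*n).choose n = (2*n) * (2*n-1).choose (n-1) := by
    have h := absorb (2*n-1) (n-1)
    rwa [show 2*n-1+1 = 2*n by omega, show n-1+1 = n by omega] at h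
  exact_mod_cast (congrArg (Nat.cast : ℕ → ℤ) h).symm

lemma tele_sum (n : ℕ) (hn : 0 < n) :
    2 * ∑ k ∈ Icc 1 n, (k:ℤ) * ((2*n).choose (n-k)) = (n:ℤ) * ((2*n).choose n) := by
  set g : ℕ → ℤ := fun k => if k ≤ n then ((2*n-1).choose (n-k) : ℤ) else 0 with hg
  have hsum : ∑ k ∈ Icc 1 n, (k:ℤ) * ((2*n).choose (n-k))
      = (n:ℤ) * ∑ k ∈ Icc 1 n, (g k - g (k+1)) := by
    rw [Finset.mul_sum]
    refine Finset.sum_congr rfl fun k hk => ?_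
    simp only [Finset.mem_Icc] at hk
    exact tele_term n k hn hk.1 hk.2
  have htel : ∑ k ∈ Icc 1 n, (g k - g (k+1)) = g 1 - g (n+1) := by
    rw [← Finset.Ico_add_one_right_eq_Icc, Finset.sum_Ico_eq_sum_range]
    have : ∀ i, g (1+i) - g (1+i+1) = (fun j => g (j+1)) i - (fun j => g (j+1)) (i+1) := by
      intro i; simp [add_comm, add_assoc, add_left_comm]
    calc ∑ i ∈ Finset.range (n+1-1), (g (1+i) - g (1+(i+1)))
        = ∑ i ∈ Finset.range n, ((fun j => g (j+1)) i - (fun j => g (j+1)) (i+1)) := by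
          rw [show n+1-1 = n from rfl]
          refine Finset.sum_congr rfl fun i _ => ?_
          simp [add_comm, add_assoc, add_left_comm]
      _ = g 1 - g (n+1) := Finset.sum_range_sub' _ n
  rw [hsum, htel]
  have hg1 : g 1 = ((2*n-1).choose (n-1) : ℤ) := by
    simp only [hg]; rw [if_pos (show 1 ≤ n from hn)]
  have hgn : g (n+1) = 0 := by simp [hg]
  rw [hg1, hgn, sub_zero, ← half_id n hn]; ring

lemma rec_sum (m n : ℕ) (hn : 0 < n) :
    ∑ k ∈ Icc 1 n, (k:ℤ)^(m+2) * ((2*n).choose (n-k)) =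
      (n:ℤ)^2 * ∑ k ∈ Icc 1 n, (k:ℤ)^m * ((2*n).choose (n-k))
      - 2*n*(2*n-1) * ∑ k ∈ Icc 1 (n-1), (k:ℤ)^m * ((2*(n-1)).choose (n-1-k)) := by
  have hsub : ∑ k ∈ Icc 1 (n-1), (k:ℤ)^m * ((2*(n-1)).choose (n-1-k))
      = ∑ k ∈ Icc 1 n, (k:ℤ)^m * (if k ≤ n-1 then ((2*(n-1)).choose (n-1-k) : ℤ) else 0) := by
    have hz : ∀ k ∈ Icc 1 n, k ∉ Icc 1 (n-1) →
        (k:ℤ)^m * (if k ≤ n-1 then ((2*(n-1)).choose (n-1-k) : ℤ) else 0) = 0 := by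
      intro k hk hnk
      simp only [Finset.mem_Icc] at hk hnk
      have hne : ¬ (k ≤ n-1) := by omega
      rw [if_neg hne, mul_zero]
    rw [← Finset.sum_subset (Finset.Icc_subset_Icc_right (by omega : n-1 ≤ n)) hz]
    refine Finset.sum_congr rfl fun k hk => ?_
    simp only [Finset.mem_Icc] at hk
    rw [if_pos hk.2]
  rw [hsub, Finset.mul_sum, Finset.mul_sum, ← Finset.sum_sub_distrib]
  refine Finset.sum_congr rfl fun k hk => ?_
  simp only [Finset.mem_Icc] at hk
  exact rec_term n k m hn hk.1 hk.2

lemma bridge (n : ℕ) (hn : 0 < n) :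
    (2*(n:ℤ)*(2*(n:ℤ)-1)) * ((2*(n-1)).choose (n-1) : ℤ) = (n:ℤ)^2 * ((2*n).choose n : ℤ) := by
  have h1 : n * (2*n).choose n = (2*n) * (2*n-1).choose (n-1) := by
    have h := absorb (2*n-1) (n-1)
    rwa [show 2*n-1+1 = 2*n by omega, show n-1+1 = n by omega] at h
  have h2 : n * (2*n-1).choose (n-1) = (2*n-1) * (2*(n-1)).choose (n-1) := by
    have hsym : (2*n-1).choose (n-1) = (2*n-1).choose n := by
      rw [← Nat.choose_symm (show n ≤ 2*n-1 by omega), show 2*n-1-n = n-1 by omega]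
    rw [hsym]
    have h := absorb (2*(n-1)) (n-1)
    rwa [show 2*(n-1)+1 = 2*n-1 by omega, show n-1+1 = n by omega] at h
  have c1 : (n:ℤ) * ((2*n).choose n : ℤ) = (2*(n:ℤ)) * ((2*n-1).choose (n-1) : ℤ) := by
    exact_mod_cast congrArg (Nat.cast : ℕ → ℤ) h1
  have c2 : (n:ℤ) * ((2*n-1).choose (n-1) : ℤ) = (2*(n:ℤ)-1) * ((2*(n-1)).choose (n-1) : ℤ) := by
    have := congrArg (Nat.cast : ℕ → ℤ) h2
    push_cast [Nat.cast_sub (show 1 ≤ 2*n by omega)] at this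
    linarith [this]
  linear_combination (-(n:ℤ))*c1 + (-(2*(n:ℤ)))*c2

lemma combine (n : ℕ) (hn : 0 < n) (A B : ℤ)
    (hA : (n:ℤ) * ((2*n).choose n : ℤ) ∣ 2*A)
    (hB : ((n-1 : ℕ):ℤ) * ((2*(n-1)).choose (n-1) : ℤ) ∣ 2*B) :
    ((n:ℤ)^2 * ((2*n).choose n : ℤ)) ∣ 2*((n:ℤ)^2 * A - 2*n*(2*n-1)*B) := by
  obtain ⟨t, ht⟩ := hA
  obtain ⟨s, hs⟩ := hB
  refine ⟨(n:ℤ)*t - ((n-1:ℕ):ℤ)*s, ?_⟩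
  have hb := bridge n hn
  linear_combination (n:ℤ)^2 * ht - 2*(n:ℤ)*(2*(n:ℤ)-1)*hs - ((n-1:ℕ):ℤ)*s*hb

theorem stmt_12 (n r : ℕ) (hn : 0 < n) :
    ((n : ℤ) ^ 2 * (Nat.choose (2 * n) n : ℤ)) ∣
      2 * ∑ k ∈ Finset.Icc 1 n, (k : ℤ) ^ (2 * r + 3) * (Nat.choose (2 * n) (n - k) : ℤ) := by
  induction r generalizing n with
  | zero =>
    have hrs := rec_sum (2*0+1) n hn
    rw [show 2*0+1+2 = 2*0+3 by norm_num] at hrs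
    rw [hrs]
    apply combine n hn
    · have ht := tele_sum n hn
      refine ⟨1, ?_⟩
      rw [mul_one, ← ht]
      norm_num
    · rcases Nat.eq_or_lt_of_le hn with h1 | h1
      · have : Finset.Icc 1 (n-1) = ∅ := by
          rw [← h1]; rfl
        rw [this]
        simp
      · have ht := tele_sum (n-1) (by omega)
        refine ⟨1, ?_⟩
        rw [mul_one, ← ht]
        norm_num
  | succ r ih =>
    have hrs := rec_sum (2*r+3) n hn
    rw [show 2*r+3+2 = 2*(r+1)+3 by ring] at hrs
    rw [hrs]
    apply combine n hn
    · have := ih n hn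
      exact dvd_trans ⟨(n:ℤ), by ring⟩ this
    · rcases Nat.eq_or_lt_of_le hn with h1 | h1
      · have : Finset.Icc 1 (n-1) = ∅ := by
          rw [← h1]; rfl
        rw [this]
        simp
      · have := ih (n-1) (by omega)
        exact dvd_trans ⟨((n-1:ℕ):ℤ), by ring⟩ this
end

section
/- Let $m \geq 2$, let $n_1,\ldots,n_m$ be positive integers with $n_{m+1}=n_1$, and let $j, r$ be non-negative integers with $j \leq m$. Define $S(n_1,\ldots,n_m; r, j, q) = \frac{1}{[n_1]}\binom{n_1+n_m}{n_1}_q^{-1} \sum_{k=1}^{n_1} [2k][k]^{2r} q^{jk^2 - (r+1)k} \prod_{i=1}^m \binom{n_i+n_{i+1}}{n_i+k}_q$ (an element of $\mathbb{Q}(q)$). Then for $j \geq 1$ and $m \geq 3$: $S(n_1,\ldots,n_m; r, j, q) = \sum_{l=1}^{n_1} q^{l^2} \binom{n_1-1}{l-1}_q \binom{n_2+n_3}{n_2-l}_q S(l, n_3, \ldots, n_m; r, j-1, q)$. -/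
open Polynomial Finset

noncomputable abbrev qq : RatFunc ℚ := RatFunc.X
noncomputable def B (n k : ℕ) : RatFunc ℚ := Polynomial.aeval qq (qbinom n k)
noncomputable def I (n : ℕ) : RatFunc ℚ := Polynomial.aeval qq (qint n)

lemma hq : qq ≠ 0 := RatFunc.X_ne_zero

lemma I_eq (n : ℕ) : I n = ∑ i ∈ range n, qq ^ i := by
  simp [I, qint]

lemma I_ne (n : ℕ) (h : 1 ≤ n) : I n ≠ 0 := by
  intro h0
  have h1 : (I n) * (qq - 1) = qq ^ n - 1 := by
    rw [I_eq]; exact geom_sum_mul qq n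
  rw [h0, zero_mul] at h1
  have h2 : qq ^ n = 1 := by linear_combination -h1
  have : (Polynomial.X : Polynomial ℚ) ^ n = 1 := by
    apply IsFractionRing.injective (Polynomial ℚ) (RatFunc ℚ)
    rw [map_pow, map_one, RatFunc.algebraMap_X]
    exact h2
  have := congrArg (Polynomial.eval 0) this
  simp [zero_pow (by omega : n ≠ 0)] at this

lemma B_zero (n : ℕ) : B n 0 = 1 := by
  cases n <;> simp [B, qbinom]

lemma B_pascal (n k : ℕ) : B (n+1) (k+1) = B n k + qq ^ (k+1) * B n (k+1) := by
  simp [B, qbinom]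

lemma B_zero_succ (k : ℕ) : B 0 (k+1) = 0 := by simp [B, qbinom]

lemma B_eq_zero : ∀ n k : ℕ, n < k → B n k = 0 := by
  intro n
  induction n with
  | zero => intro k hk; cases k with | zero => omega | succ k => exact B_zero_succ k
  | succ n ih =>
    intro k hk
    cases k with
    | zero => omega
    | succ k => rw [B_pascal, ih k (by omega), ih (k+1) (by omega)]; ring

lemma B_self : ∀ n : ℕ, B n n = 1 := by
  intro n
  induction n with
  | zero => exact B_zero 0
  | succ n ih => rw [B_pascal, ih, B_eq_zero n (n+1) (by omega)]; ring

noncomputable def F : ℕ → RatFunc ℚ := fun n => ∏ i ∈ range n, I (i+1)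

lemma F_ne (n : ℕ) : F n ≠ 0 := by
  apply Finset.prod_ne_zero_iff.mpr
  intro i _
  exact I_ne (i+1) (by omega)

lemma F_succ (n : ℕ) : F (n+1) = F n * I (n+1) := Finset.prod_range_succ _ n

lemma I_split (a b : ℕ) : I (a + b) = I a + qq ^ a * I b := by
  rw [I_eq, I_eq, I_eq, Finset.sum_range_add, Finset.mul_sum]
  congr 1
  exact Finset.sum_congr rfl fun i _ => by rw [pow_add]

lemma B_fact : ∀ n k : ℕ, k ≤ n → F k * F (n - k) * B n k = F n := by
  intro n
  induction n with
  | zero => intro k hk; interval_cases k; simp [B_zero, F]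
  | succ n ih =>
    intro k hk
    cases k with
    | zero => simp [B_zero, F]
    | succ k =>
      rcases Nat.lt_or_ge k n with h | h
      · -- k + 1 ≤ n
        rw [B_pascal]
        have e1 : n + 1 - (k+1) = n - k := by omega
        have e2 : n - k = (n - (k+1)) + 1 := by omega
        rw [e1, mul_add]
        have t1 : F (k+1) * F (n-k) * B n k = I (k+1) * F n := by
          rw [F_succ]
          calc F k * I (k+1) * F (n-k) * B n k = I (k+1) * (F k * F (n-k) * B n k) := by ring
          _ = I (k+1) * F n := by rw [ih k (by omega)]
        have t2 : F (k+1) * F (n-k) * (qq ^ (k+1) * B n (k+1)) = qq ^ (k+1) * I (n-k) * F n := by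
          rw [e2, F_succ (n - (k+1))]
          have e3 : n - (k+1) + 1 = n - k := by omega
          rw [e3]
          calc F (k+1) * (F (n-(k+1)) * I (n-k)) * (qq ^ (k+1) * B n (k+1))
              = qq ^ (k+1) * I (n-k) * (F (k+1) * F (n - (k+1)) * B n (k+1)) := by ring
          _ = _ := by rw [ih (k+1) (by omega)]
        rw [t1, t2]
        have : I (k+1) + qq ^ (k+1) * I (n-k) = I (n+1) := by
          rw [show n + 1 = (k+1) + (n-k) by omega] at *
          exact (I_split (k+1) (n-k)).symm
        calc I (k+1) * F n + qq ^ (k+1) * I (n-k) * F n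
            = (I (k+1) + qq ^ (k+1) * I (n-k)) * F n := by ring
        _ = I (n+1) * F n := by rw [this]
        _ = F (n+1) := by rw [F_succ]; ring
      · -- k = n
        have : k = n := by omega
        subst this
        rw [B_self]
        simp [F]

lemma B_eq (n k : ℕ) (hk : k ≤ n) : B n k = F n * (F k)⁻¹ * (F (n-k))⁻¹ := by
  have h := B_fact n k hk
  field_simp [F_ne]
  linear_combination h

lemma vdm (M N : ℕ) : ∀ K, B (M + N) K
    = ∑ j ∈ range (K+1), qq ^ ((j:ℤ) * ((N:ℤ) + (j:ℤ) - (K:ℤ))) * B M j * B N (K - j) := by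
  induction N with
  | zero =>
    intro K
    rw [Finset.sum_eq_single_of_mem K (by simp)]
    · norm_num [B_zero]
    · intro j hj hne
      have hj' : j < K := by simp at hj; omega
      rw [show K - j = (K - j - 1) + 1 by omega, B_zero_succ]
      ring
  | succ N ih =>
    intro K
    cases K with
    | zero =>
      simp [B_zero]
    | succ K =>
      push_cast
      rw [Finset.sum_range_succ]
      have key : ∀ j ∈ range (K+1),
          qq ^ ((j:ℤ) * ((N:ℤ) + 1 + (j:ℤ) - ((K:ℤ) + 1))) * B M j * B (N+1) (K+1-j)
          = qq ^ ((j:ℤ)*((N:ℤ)+(j:ℤ)-(K:ℤ))) * B M j * B N (K-j)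
            + qq^((K:ℤ)+1) * (qq ^ ((j:ℤ)*((N:ℤ)+(j:ℤ)-((K:ℤ)+1))) * B M j * B N (K+1-j)) := by
        intro j hj
        have hjK : j ≤ K := by simp at hj; omega
        rw [show K+1-j = (K-j)+1 by omega, B_pascal]
        have e1 : (j:ℤ) * ((N:ℤ) + 1 + (j:ℤ) - ((K:ℤ)+1)) = (j:ℤ)*((N:ℤ)+(j:ℤ)-(K:ℤ)) := by
          ring
        rw [e1]
        have e2 : qq ^ ((j:ℤ)*((N:ℤ)+(j:ℤ)-(K:ℤ))) * (qq^((K-j)+1:ℕ))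
            = qq^((K:ℤ)+1) * qq ^ ((j:ℤ)*((N:ℤ)+(j:ℤ)-((K:ℤ)+1))) := by
          rw [← zpow_natCast qq ((K-j)+1), ← zpow_add₀ hq, ← zpow_add₀ hq]
          congr 1
          have : (((K-j)+1:ℕ):ℤ) = (K:ℤ)+1-(j:ℤ) := by push_cast [hjK]; ring
          rw [this]; ring
        linear_combination (B M j * B N ((K-j)+1)) * e2
      rw [Finset.sum_congr rfl key, Finset.sum_add_distrib, ← Finset.mul_sum]
      have ih1 := ih K
      have ih2 := ih (K+1)
      rw [Finset.sum_range_succ] at ih2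
      push_cast at ih2
      simp only [Nat.sub_self, B_zero] at ih2
      have pasc : B (M + (N+1)) (K+1) = B (M+N) K + qq^(K+1) * B (M+N) (K+1) := by
        rw [show M + (N+1) = (M+N)+1 by omega, B_pascal]
      have hpow1 : qq^(K+1:ℕ) = qq^((K:ℤ)+1) := by
        rw [← zpow_natCast qq (K+1)]; norm_num
      have hpow2 : qq^((K:ℤ)+1) * qq ^ (((K:ℤ)+1) * ((N:ℤ) + ((K:ℤ)+1) - ((K:ℤ)+1)))
          = qq ^ (((K:ℤ)+1) * ((N:ℤ) + 1 + ((K:ℤ)+1) - ((K:ℤ)+1))) := by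
        rw [← zpow_add₀ hq]
        congr 1
        ring
      simp only [Nat.sub_self, B_zero]
      rw [pasc, ih1, hpow1]
      have e3 : (((K+1:ℕ)):ℤ) * ((N:ℤ) + 1 + (((K+1:ℕ)):ℤ) - ((K:ℤ)+1))
          = ((K:ℤ)+1) * ((N:ℤ) + 1 + ((K:ℤ)+1) - ((K:ℤ)+1)) := by push_cast; ring
      rw [e3]
      linear_combination qq^((K:ℤ)+1) * ih2 + (B M (K+1)) * hpow2

lemma I_eqF (l : ℕ) (h : 1 ≤ l) : I l = F l * (F (l-1))⁻¹ := by
  have : F l = F (l-1) * I l := by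
    rw [show l = (l-1)+1 by omega, F_succ]; rw [show l-1+1-1 = l-1 by omega]
  rw [this]
  field_simp [F_ne]

lemma B_eqF (n k m : ℕ) (h1 : k ≤ n) (h2 : n - k = m) : B n k = F n * (F k)⁻¹ * (F m)⁻¹ := by
  rw [← h2]; exact B_eq n k h1

lemma B_eqF2 (n k w m : ℕ) (h1 : k ≤ n) (hw : w = n) (h2 : n - k = m) :
    B n k = F w * (F k)⁻¹ * (F m)⁻¹ := by
  rw [hw]; exact B_eqF n k m h1 h2

lemma I_inv_eqF (l : ℕ) (h : 1 ≤ l) : (I l)⁻¹ = F (l-1) * (F l)⁻¹ := by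
  rw [I_eqF l h, mul_inv, inv_inv, mul_comm]

lemma B_inv_eqF2 (n k w m : ℕ) (h1 : k ≤ n) (hw : w = n) (h2 : n - k = m) :
    (B n k)⁻¹ = F k * F m * (F w)⁻¹ := by
  rw [B_eqF2 n k w m h1 hw h2]
  simp only [mul_inv, inv_inv]
  ring

lemma inv_transfer (x y u v : RatFunc ℚ) (hu : u ≠ 0) (hv : v ≠ 0) (h : x * v = y * u) :
    x * u⁻¹ = y * v⁻¹ := by
  field_simp
  linear_combination h

set_option maxHeartbeats 1000000 in
lemma pointwise (a b c d k : ℕ) (ha : 1 ≤ a) (hb : 1 ≤ b) (hc : 1 ≤ c) (hd : 1 ≤ d)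
    (hk1 : 1 ≤ k) (hka : k ≤ a) :
    (I a)⁻¹ * (B (a+d) a)⁻¹ *
      (qq ^ (k^2) * (B (a+b) (a+k) * B (b+c) (b+k) * B (d+a) (d+k)))
    = ∑ l ∈ Icc k a, qq ^ (l^2) * B (a-1) (l-1) * B (b+c) (c+l) *
        ((I l)⁻¹ * (B (l+d) l)⁻¹ * (B (l+c) (l+k) * B (d+l) (d+k))) := by
  by_cases hkc : c < k
  · have h0 : ∀ l ∈ Icc k a, qq ^ (l^2) * B (a-1) (l-1) * B (b+c) (c+l) *
        ((I l)⁻¹ * (B (l+d) l)⁻¹ * (B (l+c) (l+k) * B (d+l) (d+k))) = 0 := by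
      intro l hl
      rw [B_eq_zero (l+c) (l+k) (by omega)]; ring
    rw [Finset.sum_eq_zero h0, B_eq_zero (b+c) (b+k) (by omega)]
    ring
  by_cases hkb : b < k
  · have h0 : ∀ l ∈ Icc k a, qq ^ (l^2) * B (a-1) (l-1) * B (b+c) (c+l) *
        ((I l)⁻¹ * (B (l+d) l)⁻¹ * (B (l+c) (l+k) * B (d+l) (d+k))) = 0 := by
      intro l hl
      simp only [Finset.mem_Icc] at hl
      rw [B_eq_zero (b+c) (c+l) (by omega)]; ring
    rw [Finset.sum_eq_zero h0, B_eq_zero (a+b) (a+k) (by omega)]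
    ring
  push_neg at hkc hkb
  obtain ⟨e, he1, he2, he3⟩ : ∃ e, e ≤ a ∧ e ≤ b ∧ (e = a ∨ e = b) := by
    rcases le_total a b with h | h
    · exact ⟨a, le_refl a, h, Or.inl rfl⟩
    · exact ⟨b, h, le_refl b, Or.inr rfl⟩
  set C : RatFunc ℚ := qq^(k^2) * F (a-1) * F (b+c) * F d *
    (F (c-k))⁻¹ * (F (d+k))⁻¹ * (F (a+k))⁻¹ * (F (b-k))⁻¹ with hC
  set g : ℕ → RatFunc ℚ := fun j =>
    qq ^ ((j:ℤ) * (((b-k:ℕ):ℤ) + (j:ℤ) - ((b+k:ℕ):ℤ))) * B (a+k) j * B (b-k) ((b+k) - j) with hg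
  have step1 : ∑ l ∈ Icc k a, qq ^ (l^2) * B (a-1) (l-1) * B (b+c) (c+l) *
        ((I l)⁻¹ * (B (l+d) l)⁻¹ * (B (l+c) (l+k) * B (d+l) (d+k)))
      = ∑ l ∈ Icc k e, qq ^ (l^2) * B (a-1) (l-1) * B (b+c) (c+l) *
        ((I l)⁻¹ * (B (l+d) l)⁻¹ * (B (l+c) (l+k) * B (d+l) (d+k))) := by
    refine (Finset.sum_subset ?_ ?_).symm
    · intro x hx
      simp only [Finset.mem_Icc] at hx ⊢
      omega
    · intro x hx hnx
      simp only [Finset.mem_Icc] at hx hnx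
      rw [B_eq_zero (b+c) (c+x) (by rcases he3 with h|h <;> omega)]
      ring
  have step2 : ∀ l ∈ Icc k e, qq ^ (l^2) * B (a-1) (l-1) * B (b+c) (c+l) *
        ((I l)⁻¹ * (B (l+d) l)⁻¹ * (B (l+c) (l+k) * B (d+l) (d+k)))
      = C * g (l+k) := by
    intro l hl
    simp only [Finset.mem_Icc] at hl
    obtain ⟨hkl, hle⟩ := hl
    have hla : l ≤ a := by omega
    have hlb : l ≤ b := by omega
    have hl1 : 1 ≤ l := by omega
    simp only [hg]
    rw [show (b+k) - (l+k) = b - l by omega]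
    have hpow : qq ^ (l^2) = qq ^ (k^2) *
        qq ^ (((l+k:ℕ):ℤ) * (((b-k:ℕ):ℤ) + ((l+k:ℕ):ℤ) - ((b+k:ℕ):ℤ))) := by
      rw [← zpow_natCast qq (l^2), ← zpow_natCast qq (k^2), ← zpow_add₀ hq]
      congr 1
      push_cast [hkb, hkl]
      ring
    rw [B_eqF (a-1) (l-1) (a-l) (by omega) (by omega),
        B_eqF (b+c) (c+l) (b-l) (by omega) (by omega),
        B_eqF2 (l+c) (l+k) (c+l) (c-k) (by omega) (by omega) (by omega),
        B_eqF (d+l) (d+k) (l-k) (by omega) (by omega),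
        B_inv_eqF2 (l+d) l (d+l) d (by omega) (by omega) (by omega),
        B_eqF (a+k) (l+k) (a-l) (by omega) (by omega),
        B_eqF (b-k) (b-l) (l-k) (by omega) (by omega),
        I_inv_eqF l hl1, hpow, hC]
    have key : (qq^(k^2) * qq ^ (((l+k:ℕ):ℤ) * (((b-k:ℕ):ℤ) + ((l+k:ℕ):ℤ) - ((b+k:ℕ):ℤ)))
          * F (a-1) * F (b+c) * F (l-1) * F l * F d * F (c+l) * F (d+l))
          * (F (l-1) * F l * F (a-l) * F (c+l) * F (b-l) * F (l+k) * F (c-k) * F (d+k)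
              * F (l-k) * F (d+l))⁻¹
        = (qq^(k^2) * qq ^ (((l+k:ℕ):ℤ) * (((b-k:ℕ):ℤ) + ((l+k:ℕ):ℤ) - ((b+k:ℕ):ℤ)))
          * F (a-1) * F (b+c) * F d * F (a+k) * F (b-k))
          * (F (c-k) * F (d+k) * F (a+k) * F (b-k) * F (l+k) * F (a-l) * F (b-l) * F (l-k))⁻¹ := by
      refine inv_transfer _ _ _ _ ?_ ?_ (by ring)
      · apply_rules [mul_ne_zero, F_ne]
      · apply_rules [mul_ne_zero, F_ne]
    calc _ = (qq^(k^2) * qq ^ (((l+k:ℕ):ℤ) * (((b-k:ℕ):ℤ) + ((l+k:ℕ):ℤ) - ((b+k:ℕ):ℤ)))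
          * F (a-1) * F (b+c) * F (l-1) * F l * F d * F (c+l) * F (d+l))
          * (F (l-1) * F l * F (a-l) * F (c+l) * F (b-l) * F (l+k) * F (c-k) * F (d+k)
              * F (l-k) * F (d+l))⁻¹ := by ring
      _ = _ := by rw [key]; ring
  rw [step1, Finset.sum_congr rfl step2, ← Finset.mul_sum]
  have step3 : ∑ l ∈ Icc k e, g (l+k) = ∑ j ∈ Icc (k+k) (e + k), g j := by
    rw [← Finset.image_add_right_Icc]
    rw [Finset.sum_image (by intro x _ y _ h; dsimp only at h; omega)]
  have step4 : ∑ j ∈ Icc (k+k) (e + k), g j = ∑ j ∈ range (b+k+1), g j := by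
    refine Finset.sum_subset ?_ ?_
    · intro x hx
      simp only [Finset.mem_Icc, Finset.mem_range] at hx ⊢
      omega
    · intro x hx hnx
      simp only [Finset.mem_Icc, Finset.mem_range] at hx hnx
      simp only [hg]
      rcases Nat.lt_or_ge x (k+k) with h | h
      · rw [B_eq_zero (b-k) ((b+k)-x) (by omega)]; ring
      · have hxa : a + k < x := by rcases he3 with h'|h' <;> omega
        rw [B_eq_zero (a+k) x (by omega)]; ring
  have step5 : ∑ j ∈ range (b+k+1), g j = B (a+b) (b+k) := by
    have h5 := vdm (a+k) (b-k) (b+k)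
    rw [show (a+k) + (b-k) = a+b by omega] at h5
    simp only [hg]
    exact h5.symm
  rw [step3, step4, step5]
  rw [B_inv_eqF2 (a+d) a (a+d) d (by omega) (by omega) (by omega),
      B_eqF (a+b) (a+k) (b-k) (by omega) (by omega),
      B_eqF (b+c) (b+k) (c-k) (by omega) (by omega),
      B_eqF2 (d+a) (d+k) (a+d) (a-k) (by omega) (by omega) (by omega),
      B_eqF (a+b) (b+k) (a-k) (by omega) (by omega),
      I_inv_eqF a ha, hC]
  have key : (qq^(k^2) * F (a-1) * F a * F d * F (a+b) * F (b+c) * F (a+d))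
        * (F a * F (a+d) * F (a+k) * F (b-k) * F (b+k) * F (c-k) * F (d+k) * F (a-k))⁻¹
      = (qq^(k^2) * F (a-1) * F d * F (a+b) * F (b+c))
        * (F (a+k) * F (b-k) * F (b+k) * F (c-k) * F (d+k) * F (a-k))⁻¹ := by
    refine inv_transfer _ _ _ _ ?_ ?_ (by ring)
    · apply_rules [mul_ne_zero, F_ne]
    · apply_rules [mul_ne_zero, F_ne]
  calc _ = (qq^(k^2) * F (a-1) * F a * F d * F (a+b) * F (b+c) * F (a+d))
        * (F a * F (a+d) * F (a+k) * F (b-k) * F (b+k) * F (c-k) * F (d+k) * F (a-k))⁻¹ := by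
        ring
    _ = _ := by rw [key]; ring

noncomputable def Sfun (q : RatFunc ℚ) (m : ℕ) (n : ℕ → ℕ) (r j : ℕ) : RatFunc ℚ :=
  (Polynomial.aeval q (qint (n 1)))⁻¹ * (Polynomial.aeval q (qbinom (n 1 + n m) (n 1)))⁻¹ *
    ∑ k ∈ Finset.Icc 1 (n 1),
      Polynomial.aeval q (qint (2 * k)) * (Polynomial.aeval q (qint k)) ^ (2 * r) *
        q ^ ((j : ℤ) * (k : ℤ) ^ 2 - ((r : ℤ) + 1) * (k : ℤ)) *
        ∏ i ∈ Finset.Icc 1 m, Polynomial.aeval q (qbinom (n i + n (i + 1)) (n i + k))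

lemma Sfun_eq (m : ℕ) (n : ℕ → ℕ) (r j : ℕ) :
    Sfun RatFunc.X m n r j = (I (n 1))⁻¹ * (B (n 1 + n m) (n 1))⁻¹ *
      ∑ k ∈ Icc 1 (n 1), I (2*k) * (I k)^(2*r) *
        qq ^ ((j:ℤ)*(k:ℤ)^2 - ((r:ℤ)+1)*(k:ℤ)) *
        ∏ i ∈ Icc 1 m, B (n i + n (i+1)) (n i + k) := rfl

lemma prod_split (m : ℕ) (hm : 3 ≤ m) (h : ℕ → RatFunc ℚ) :
    ∏ i ∈ Icc 1 m, h i = h 1 * h 2 * h m * ∏ i ∈ Icc 3 (m-1), h i := by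
  have hset : Icc 1 m = insert 1 (insert 2 (insert m (Icc 3 (m-1)))) := by
    ext x; simp only [Finset.mem_Icc, Finset.mem_insert]; omega
  rw [hset, Finset.prod_insert (by simp only [Finset.mem_insert, Finset.mem_Icc]; omega),
      Finset.prod_insert (by simp only [Finset.mem_insert, Finset.mem_Icc]; omega),
      Finset.prod_insert (by simp only [Finset.mem_Icc]; omega)]
  ring

lemma prod_split2 (m : ℕ) (hm : 3 ≤ m) (h : ℕ → RatFunc ℚ) :
    ∏ i ∈ Icc 1 (m-1), h i = h 1 * h (m-1) * ∏ i ∈ Icc 2 (m-2), h i := by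
  have hset : Icc 1 (m-1) = insert 1 (insert (m-1) (Icc 2 (m-2))) := by
    ext x; simp only [Finset.mem_Icc, Finset.mem_insert]; omega
  rw [hset, Finset.prod_insert (by simp only [Finset.mem_insert, Finset.mem_Icc]; omega),
      Finset.prod_insert (by simp only [Finset.mem_Icc]; omega)]
  ring

lemma prod_shift (u v : ℕ) (h : ℕ → RatFunc ℚ) :
    ∏ i ∈ Icc u v, h (i+1) = ∏ i ∈ Icc (u+1) (v+1), h i := by
  rw [← Finset.image_add_right_Icc, Finset.prod_image (by intro x _ y _ hxy; dsimp only at hxy; omega)]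

set_option maxHeartbeats 2000000 in
theorem stmt_14 (m : ℕ) (hm : 3 ≤ m) (n : ℕ → ℕ)
    (hpos : ∀ i ∈ Finset.Icc 1 m, 0 < n i) (hcyc : n (m + 1) = n 1)
    (r j : ℕ) (hj1 : 1 ≤ j) (hjm : j ≤ m) :
    Sfun (RatFunc.X : RatFunc ℚ) m n r j
      = ∑ l ∈ Finset.Icc 1 (n 1),
          (RatFunc.X : RatFunc ℚ) ^ (l ^ 2) *
            Polynomial.aeval (RatFunc.X : RatFunc ℚ) (qbinom (n 1 - 1) (l - 1)) *
            Polynomial.aeval (RatFunc.X : RatFunc ℚ) (qbinom (n 2 + n 3) (n 3 + l)) *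
            Sfun (RatFunc.X : RatFunc ℚ) (m - 1)
              (fun i => if i = 1 ∨ i = m then l else n (i + 1)) r (j - 1) := by
  have ha : 1 ≤ n 1 := hpos 1 (by simp only [Finset.mem_Icc]; omega)
  have hb : 1 ≤ n 2 := hpos 2 (by simp only [Finset.mem_Icc]; omega)
  have hc : 1 ≤ n 3 := hpos 3 (by simp only [Finset.mem_Icc]; omega)
  have hd : 1 ≤ n m := hpos m (by simp only [Finset.mem_Icc]; omega)
  set P : ℕ → RatFunc ℚ := fun k => ∏ i ∈ Icc 3 (m-1), B (n i + n (i+1)) (n i + k) with hP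
  set G : ℕ → RatFunc ℚ := fun k => I (2*k) * (I k)^(2*r) *
      qq ^ ((((j-1:ℕ)):ℤ)*(k:ℤ)^2 - ((r:ℤ)+1)*(k:ℤ)) * P k with hG
  -- inner Sfun rewrite
  have inner : ∀ l : ℕ, Sfun RatFunc.X (m-1)
      (fun i => if i = 1 ∨ i = m then l else n (i+1)) r (j-1)
      = (I l)⁻¹ * (B (l + n m) l)⁻¹ *
        ∑ k ∈ Icc 1 l, G k * (B (l + n 3) (l + k) * B (n m + l) (n m + k)) := by
    intro l
    rw [Sfun_eq]
    have c1 : (if (1:ℕ) = 1 ∨ (1:ℕ) = m then l else n (1+1)) = l := if_pos (Or.inl rfl)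
    have cm1 : (if m-1 = 1 ∨ m-1 = m then l else n (m-1+1)) = n m := by
      rw [if_neg (by omega)]; congr 1; omega
    rw [c1, cm1]
    congr 1
    refine Finset.sum_congr rfl fun k hk => ?_
    rw [prod_split2 m hm]
    have d2 : (if (1+1:ℕ) = 1 ∨ (1+1:ℕ) = m then l else n (1+1+1)) = n 3 := by
      rw [if_neg (by omega)]
    have d3 : (if (m-1+1:ℕ) = 1 ∨ (m-1+1:ℕ) = m then l else n (m-1+1+1)) = l := by
      rw [if_pos (by omega)]
    rw [c1, d2, d3, cm1]
    have dstep : ∀ i ∈ Icc 2 (m-2),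
        B ((if i = 1 ∨ i = m then l else n (i+1)) + (if i+1 = 1 ∨ i+1 = m then l else n (i+1+1)))
          ((if i = 1 ∨ i = m then l else n (i+1)) + k)
        = B (n (i+1) + n (i+1+1)) (n (i+1) + k) := by
      intro i hi
      simp only [Finset.mem_Icc] at hi
      rw [if_neg (by omega), if_neg (by omega)]
    rw [Finset.prod_congr rfl dstep]
    have dmid := prod_shift 2 (m-2) (fun i => B (n i + n (i+1)) (n i + k))
    rw [dmid, show (2:ℕ)+1 = 3 from rfl, show m-2+1 = m-1 by omega, hG]
    simp only [hP]
    ring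
  -- LHS product split
  have lprod : ∀ k : ℕ, ∏ i ∈ Icc 1 m, B (n i + n (i+1)) (n i + k)
      = B (n 1 + n 2) (n 1 + k) * B (n 2 + n 3) (n 2 + k) * B (n m + n 1) (n m + k) * P k := by
    intro k
    rw [prod_split m hm, show n m + n (m+1) = n m + n 1 by rw [hcyc]]
  -- zpow split
  have hzp : ∀ k : ℕ, qq ^ ((j:ℤ)*(k:ℤ)^2 - ((r:ℤ)+1)*(k:ℤ))
      = qq ^ (k^2) * qq ^ ((((j-1:ℕ)):ℤ)*(k:ℤ)^2 - ((r:ℤ)+1)*(k:ℤ)) := by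
    intro k
    rw [← zpow_natCast qq (k^2), ← zpow_add₀ hq]
    congr 1
    have hcast : (((j-1:ℕ)):ℤ) = (j:ℤ) - 1 := by omega
    rw [hcast]
    push_cast
    ring
  rw [Sfun_eq]
  -- rewrite the RHS of the goal
  have rhs_eq : ∀ l ∈ Icc 1 (n 1),
      (RatFunc.X : RatFunc ℚ) ^ (l ^ 2) *
        Polynomial.aeval (RatFunc.X : RatFunc ℚ) (qbinom (n 1 - 1) (l - 1)) *
        Polynomial.aeval (RatFunc.X : RatFunc ℚ) (qbinom (n 2 + n 3) (n 3 + l)) *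
        Sfun (RatFunc.X : RatFunc ℚ) (m - 1)
          (fun i => if i = 1 ∨ i = m then l else n (i + 1)) r (j - 1)
      = ∑ k ∈ Icc 1 l, G k *
          (qq ^ (l^2) * B (n 1 - 1) (l-1) * B (n 2 + n 3) (n 3 + l) *
            ((I l)⁻¹ * (B (l + n m) l)⁻¹ * (B (l + n 3) (l+k) * B (n m + l) (n m + k)))) := by
    intro l _
    rw [inner l]
    show qq ^ (l^2) * B (n 1 - 1) (l-1) * B (n 2 + n 3) (n 3 + l) *
        ((I l)⁻¹ * (B (l + n m) l)⁻¹ * ∑ k ∈ Icc 1 l,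
          G k * (B (l + n 3) (l + k) * B (n m + l) (n m + k)))
      = ∑ k ∈ Icc 1 l, G k *
          (qq ^ (l^2) * B (n 1 - 1) (l-1) * B (n 2 + n 3) (n 3 + l) *
            ((I l)⁻¹ * (B (l + n m) l)⁻¹ * (B (l + n 3) (l+k) * B (n m + l) (n m + k))))
    rw [Finset.mul_sum, Finset.mul_sum]
    refine Finset.sum_congr rfl fun k hk => ?_
    ring
  rw [Finset.sum_congr rfl rhs_eq]
  -- rewrite the LHS sum
  have lhs_eq : ∀ k ∈ Icc 1 (n 1),
      I (2*k) * (I k)^(2*r) * qq ^ ((j:ℤ)*(k:ℤ)^2 - ((r:ℤ)+1)*(k:ℤ)) *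
        ∏ i ∈ Icc 1 m, B (n i + n (i+1)) (n i + k)
      = G k * (qq ^ (k^2) *
          (B (n 1 + n 2) (n 1 + k) * B (n 2 + n 3) (n 2 + k) * B (n m + n 1) (n m + k))) := by
    intro k _
    rw [lprod k, hzp k, hG]
    simp only [hP]
    ring
  rw [Finset.sum_congr rfl lhs_eq, Finset.mul_sum]
  have pw : ∀ k ∈ Icc 1 (n 1),
      (I (n 1))⁻¹ * (B (n 1 + n m) (n 1))⁻¹ * (G k * (qq ^ (k^2) *
        (B (n 1 + n 2) (n 1 + k) * B (n 2 + n 3) (n 2 + k) * B (n m + n 1) (n m + k))))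
      = ∑ l ∈ Icc k (n 1), G k *
          (qq ^ (l^2) * B (n 1 - 1) (l-1) * B (n 2 + n 3) (n 3 + l) *
            ((I l)⁻¹ * (B (l + n m) l)⁻¹ * (B (l + n 3) (l+k) * B (n m + l) (n m + k)))) := by
    intro k hk
    simp only [Finset.mem_Icc] at hk
    have hpt := pointwise (n 1) (n 2) (n 3) (n m) k ha hb hc hd hk.1 hk.2
    calc (I (n 1))⁻¹ * (B (n 1 + n m) (n 1))⁻¹ * (G k * (qq ^ (k^2) *
        (B (n 1 + n 2) (n 1 + k) * B (n 2 + n 3) (n 2 + k) * B (n m + n 1) (n m + k))))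
        = G k * ((I (n 1))⁻¹ * (B (n 1 + n m) (n 1))⁻¹ * (qq ^ (k^2) *
          (B (n 1 + n 2) (n 1 + k) * B (n 2 + n 3) (n 2 + k) * B (n m + n 1) (n m + k)))) := by
          ring
      _ = G k * ∑ l ∈ Icc k (n 1), qq ^ (l^2) * B (n 1 - 1) (l-1) * B (n 2 + n 3) (n 3 + l) *
            ((I l)⁻¹ * (B (l + n m) l)⁻¹ * (B (l + n 3) (l+k) * B (n m + l) (n m + k))) := by
          rw [hpt]
      _ = _ := by
          rw [Finset.mul_sum]
  rw [Finset.sum_congr rfl pw]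
  rw [Finset.sum_comm' (s := Icc 1 (n 1)) (t := fun k => Icc k (n 1))
    (t' := Icc 1 (n 1)) (s' := fun l => Icc 1 l) (fun x y => by
      simp only [Finset.mem_Icc]
      omega)]
end
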